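/- There exists a finite digraph that is rectangular but does not admit a Maltsev polymorphism. -/

import Mathlib

/-- A digraph (on vertex type `V`, with edge relation `E`) is rectangular if
whenever `(x,y)`, `(x',y)`, `(x',y')` are edges, so is `(x,y')`. -/
def Rectangular {V : Type*} (E : V → V → Prop) : Prop :=
  ∀ x x' y y' : V, E x y → E x' y → E x' y' → E x y'

/-- `x R⁺ y` iff there is a common out-neighbour `z` with edges `(x,z)` and `(y,z)`. -/
def Rplus {V : Type*} (E : V → V → Prop) (x y : V) : Prop := ∃ z, E x z ∧ E y z

/-- `x R⁻ y` iff there is a common in-neighbour `z` with edges `(z,x)` and `(z,y)`. -/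
def Rminus {V : Type*} (E : V → V → Prop) (x y : V) : Prop := ∃ z, E z x ∧ E z y

/-- `m` is a Maltsev polymorphism of the digraph with edge relation `E`:
a ternary polymorphism with `m x y y = x` and `m x x y = y`. -/
def IsMaltsev {V : Type*} (E : V → V → Prop) (m : V → V → V → V) : Prop :=
  (∀ x x' y y' z z' : V, E x x' → E y y' → E z z' → E (m x y z) (m x' y' z')) ∧
  (∀ x y : V, m x y y = x) ∧ (∀ x y : V, m x x y = y)

/-- `M` is a majority polymorphism of the digraph with edge relation `E`:
a ternary polymorphism with `M x y y = M y x y = M y y x = y`. -/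
def IsMajority {V : Type*} (E : V → V → Prop) (M : V → V → V → V) : Prop :=
  (∀ x x' y y' z z' : V, E x x' → E y y' → E z z' → E (M x y z) (M x' y' z')) ∧
  (∀ x y : V, M x y y = y) ∧ (∀ x y : V, M y x y = y) ∧ (∀ x y : V, M y y x = y)

/-- `X` is an equivalence class of `R⁺` (on the non-sink vertices):
the class `{y | x R⁺ y}` of some non-sink vertex `x`. -/
def IsRplusClass {V : Type*} (E : V → V → Prop) (X : Set V) : Prop :=
  ∃ x : V, (∃ u, E x u) ∧ X = {y | Rplus E x y}

/-- `X` is an equivalence class of `R⁻` (on the non-source vertices):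
the class `{y | x R⁻ y}` of some non-source vertex `x`. -/
def IsRminusClass {V : Type*} (E : V → V → Prop) (X : Set V) : Prop :=
  ∃ x : V, (∃ u, E u x) ∧ X = {y | Rminus E x y}

/-- `X⁺`: the union of the out-neighbourhoods of vertices of `X`. -/
def plusSet {V : Type*} (E : V → V → Prop) (X : Set V) : Set V := {u | ∃ v ∈ X, E v u}

/-- `X⁻`: the union of the in-neighbourhoods of vertices of `X`. -/
def minusSet {V : Type*} (E : V → V → Prop) (X : Set V) : Set V := {u | ∃ v ∈ X, E u v}

/-- there exists a finite digraph that is rectangular but admits no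
Maltsev polymorphism. -/
theorem exists_rectangular_not_maltsev :
    ∃ (V : Type) (_ : Fintype V) (E : V → V → Prop),
      Rectangular E ∧ ¬ ∃ m : V → V → V → V, IsMaltsev E m := by
  refine ⟨Fin 7, inferInstance,
    fun a b => (a, b) ∈ ([(0,1),(1,2),(3,4),(4,2),(3,5),(5,6)] : List (Fin 7 × Fin 7)),
    ?_, ?_⟩
  · intro x x' y y'; revert x x' y y'; beta_reduce; set_option synthInstance.maxSize 2048 in decide
  · rintro ⟨m, hpoly, hxyy, hxxy⟩
    have e1 := hpoly 0 1 3 4 3 5 (by decide) (by decide) (by decide)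
    have e2 := hpoly 1 2 4 2 5 6 (by decide) (by decide) (by decide)
    rw [hxyy] at e1
    rw [hxxy] at e2
    revert e1 e2
    generalize m 1 4 5 = w
    revert w; decide
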